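/- There are infinitely many n (in particular, all even n) such that every nondeterministic OBDD computing the Boolean function NotO_n has width at least ⌊log₂ n⌋ − 1. -/

import Mathlib

/-- Number of 1s in a binary string ν ∈ {0,1}^n. -/
def countOnes {n : ℕ} (ν : Fin n → Bool) : ℕ :=
  (Finset.univ.filter (fun i => ν i = true)).card

/-- Number of 0s in a binary string ν ∈ {0,1}^n. -/
def countZeros {n : ℕ} (ν : Fin n → Bool) : ℕ :=
  (Finset.univ.filter (fun i => ν i = false)).card

/-- Number of 1s among the first `k` bits. -/
def countOnesFirst (k : ℕ) {n : ℕ} (ν : Fin n → Bool) : ℕ :=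
  (Finset.univ.filter (fun i : Fin n => (i : ℕ) < k ∧ ν i = true)).card

/-- Number of 0s among the first `k` bits. -/
def countZerosFirst (k : ℕ) {n : ℕ} (ν : Fin n → Bool) : ℕ :=
  (Finset.univ.filter (fun i : Fin n => (i : ℕ) < k ∧ ν i = false)).card

/-- A deterministic OBDD of width `d` on `n` Boolean variables. -/
structure DOBDD (n d : ℕ) where
  ord : Equiv.Perm (Fin n)
  T : Fin n → Bool → Fin d → Fin d
  start : Fin d
  Accept : Finset (Fin d)

/-- The node reached by a deterministic OBDD after reading all input bits. -/
def DOBDD.run {n d : ℕ} (M : DOBDD n d) (ν : Fin n → Bool) : Fin d :=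
  (List.finRange n).foldl (fun v j => M.T j (ν (M.ord j)) v) M.start

def DOBDD.accepts {n d : ℕ} (M : DOBDD n d) (ν : Fin n → Bool) : Prop :=
  M.run ν ∈ M.Accept

/-- A deterministic OBDD computes a total Boolean function. -/
def DOBDD.computes {n d : ℕ} (M : DOBDD n d) (f : (Fin n → Bool) → Bool) : Prop :=
  ∀ ν, M.accepts ν ↔ f ν = true

/-- A nondeterministic OBDD of width `d` on `n` Boolean variables. -/
structure NOBDD (n d : ℕ) where
  ord : Equiv.Perm (Fin n)
  T : Fin n → Bool → Fin d → Set (Fin d)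
  start : Fin d
  Accept : Finset (Fin d)

/-- The set of nodes reachable by a nondeterministic OBDD after reading all input bits. -/
def NOBDD.reach {n d : ℕ} (M : NOBDD n d) (ν : Fin n → Bool) : Set (Fin d) :=
  (List.finRange n).foldl (fun S j => {w | ∃ v ∈ S, w ∈ M.T j (ν (M.ord j)) v}) {M.start}

def NOBDD.accepts {n d : ℕ} (M : NOBDD n d) (ν : Fin n → Bool) : Prop :=
  ∃ v ∈ M.reach ν, v ∈ M.Accept

/-- A nondeterministic OBDD computes a total Boolean function. -/
def NOBDD.computes {n d : ℕ} (M : NOBDD n d) (f : (Fin n → Bool) → Bool) : Prop :=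
  ∀ ν, M.accepts ν ↔ f ν = true

/-- The class of Boolean functions on n variables computed by deterministic
OBDDs of width at most `w`. -/
def OBDDclass (n w : ℕ) : Set ((Fin n → Bool) → Bool) :=
  {f | ∃ d, d ≤ w ∧ ∃ M : DOBDD n d, M.computes f}

/-- The class of Boolean functions on n variables computed by nondeterministic
OBDDs of width at most `w`. -/
def NOBDDclass (n w : ℕ) : Set ((Fin n → Bool) → Bool) :=
  {f | ∃ d, d ≤ w ∧ ∃ M : NOBDD n d, M.computes f}

/-- Final probability distribution of a stable probabilistic OBDD given by the pair of
left-stochastic matrices `A`, variable order `ord`, and initial node `s`. -/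
noncomputable def stableProbRun {n d : ℕ} (A : Bool → Matrix (Fin d) (Fin d) ℝ)
    (ord : Equiv.Perm (Fin n)) (s : Fin d) (ν : Fin n → Bool) : Fin d → ℝ :=
  (List.finRange n).foldl (fun v j => (A (ν (ord j))).mulVec v)
    (fun i => if i = s then 1 else 0)

/-- Final quantum state of a stable ID quantum OBDD given by the pair of matrices `U`
and the initial computational-basis state `q0`, reading bits in the natural order. -/
noncomputable def quantumRunStable {n d : ℕ} (U : Bool → Matrix (Fin d) (Fin d) ℂ) (q0 : Fin d)
    (ν : Fin n → Bool) : Fin d → ℂ :=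
  (List.finRange n).foldl (fun ψ j => (U (ν j)).mulVec ψ)
    (fun i => if i = q0 then 1 else 0)

/-- A quantum OBDD of width `d` on `n` Boolean variables. -/
structure QOBDD (n d : ℕ) where
  ord : Equiv.Perm (Fin n)
  U : Fin n → Bool → Matrix (Fin d) (Fin d) ℂ
  unitary : ∀ j b, U j b ∈ Matrix.unitaryGroup (Fin d) ℂ
  q0 : Fin d
  Accept : Finset (Fin d)

/-- The final state of a quantum OBDD on input ν. -/
noncomputable def QOBDD.finalState {n d : ℕ} (M : QOBDD n d) (ν : Fin n → Bool) : Fin d → ℂ :=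
  (List.finRange n).foldl (fun ψ j => (M.U j (ν (M.ord j))).mulVec ψ)
    (fun i => if i = M.q0 then 1 else 0)

/-- The acceptance probability of a quantum OBDD on input ν. -/
noncomputable def QOBDD.acceptProb {n d : ℕ} (M : QOBDD n d) (ν : Fin n → Bool) : ℝ :=
  ∑ i ∈ M.Accept, Complex.normSq (M.finalState ν i)

/-- `NotO_n(ν) = 0` iff `#0(ν) = #1(ν)`. -/
def NotO (n : ℕ) (ν : Fin n → Bool) : Bool := !decide (countZeros ν = countOnes ν)

/-- `NotSQUARE_n(ν) = 0` iff `(#0(ν))² = #1(ν)`. -/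
def NotSQUARE (n : ℕ) (ν : Fin n → Bool) : Bool := !decide ((countZeros ν) ^ 2 = countOnes ν)

/-- `NotPOWER_n(ν) = 0` iff `2^{#0(ν)} = #1(ν)`. -/
def NotPOWER (n : ℕ) (ν : Fin n → Bool) : Bool := !decide (2 ^ (countZeros ν) = countOnes ν)

/-- `MOD^k_n(ν) = 1` iff `#1(ν) ≡ 0 (mod k)`. -/
def MODf (n k : ℕ) (ν : Fin n → Bool) : Bool := decide (countOnes ν % k = 0)

/-- `NotO^k_n(ν) = 0` iff `#^k_0(ν) = #^k_1(ν) = k/2`. -/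
def NotOk (n k : ℕ) (ν : Fin n → Bool) : Bool :=
  !decide (countZerosFirst k ν = k / 2 ∧ countOnesFirst k ν = k / 2)

/-- The ordered subsequence of value bits `ν_{2i}` (1-indexed, `1 ≤ i ≤ k/2`) whose
marker bit `ν_{2i-1}` equals `b`; `b = false` gives `α(ν)` and `b = true` gives `β(ν)`. -/
def valueSubseq {n : ℕ} (k : ℕ) (b : Bool) (ν : Fin n → Bool) : List Bool :=
  (List.range (k / 2)).filterMap (fun j =>
    if h : 2 * j + 1 < n then
      if ν ⟨2 * j, by omega⟩ = b then some (ν ⟨2 * j + 1, h⟩) else none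
    else none)

/-- `EQS^k_n(ν) = 1` iff `α(ν) = β(ν)`. -/
def EQS (n k : ℕ) (ν : Fin n → Bool) : Bool :=
  decide (valueSubseq k false ν = valueSubseq k true ν)

/-- `NotEQS^k_n(ν) = 1 - EQS^k_n(ν)`. -/
def NotEQS (n k : ℕ) (ν : Fin n → Bool) : Bool := !(EQS n k ν)


/-! ### Auxiliary material for the lower bound -/

section NotOLB

private lemma foldl_congr'' {α β : Type*} {f g : β → α → β} (l : List α)
    (h : ∀ x ∈ l, ∀ s, f s x = g s x) (s : β) : l.foldl f s = l.foldl g s := by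
  induction l generalizing s with
  | nil => rfl
  | cons a t ih =>
    simp only [List.foldl_cons]
    rw [h a (by simp), ih (fun x hx s => h x (by simp [hx]) s)]

private lemma mem_take_finRange {n m : ℕ} {j : Fin n}
    (h : j ∈ (List.finRange n).take m) : (j : ℕ) < m := by
  obtain ⟨i, hi, hget⟩ := List.mem_iff_getElem.mp h
  rw [List.getElem_take, List.getElem_finRange] at hget
  have : (j : ℕ) = i := by rw [← hget]; rfl
  simp only [List.length_take] at hi
  omega

private lemma mem_drop_finRange {n m : ℕ} {j : Fin n}
    (h : j ∈ (List.finRange n).drop m) : m ≤ (j : ℕ) := by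
  obtain ⟨i, hi, hget⟩ := List.mem_iff_getElem.mp h
  rw [List.getElem_drop, List.getElem_finRange] at hget
  have : (j : ℕ) = m + i := by rw [← hget]; rfl
  omega

/-- The bit read at step `j` for the fooling input with parameters `a`, `b`. -/
private def auxBit (m a b : ℕ) (j : ℕ) : Bool :=
  if j < m then decide (j < a) else decide (j < m + (m - b))

/-- The fooling input: position `i` gets the bit read at step `ord.symm i`. -/
private def auxInput {n d : ℕ} (M : NOBDD n d) (m a b : ℕ) : Fin n → Bool :=
  fun i => auxBit m a b (M.ord.symm i)

private def auxStep {n d : ℕ} (M : NOBDD n d) (bt : Fin n → Bool) :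
    Set (Fin d) → Fin n → Set (Fin d) :=
  fun S j => {w | ∃ v ∈ S, w ∈ M.T j (bt j) v}

/-- The set of nodes reached after reading the first `m` steps. -/
private def auxS {n d : ℕ} (M : NOBDD n d) (m a : ℕ) : Set (Fin d) :=
  ((List.finRange n).take m).foldl
    (auxStep M (fun j => decide ((j : ℕ) < a))) {M.start}

private lemma auxInput_ord {n d : ℕ} (M : NOBDD n d) (m a b : ℕ) (j : Fin n) :
    auxInput M m a b (M.ord j) = auxBit m a b j := by
  simp [auxInput]

private lemma reach_eq {n d : ℕ} (M : NOBDD n d) (m a b : ℕ) :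
    M.reach (auxInput M m a b) =
      ((List.finRange n).drop m).foldl
        (auxStep M (fun j => decide ((j : ℕ) < m + (m - b)))) (auxS M m a) := by
  unfold NOBDD.reach
  have h1 : (List.finRange n).foldl
      (fun S j => {w | ∃ v ∈ S, w ∈ M.T j (auxInput M m a b (M.ord j)) v}) {M.start}
      = (List.finRange n).foldl (auxStep M (fun j => auxBit m a b j)) {M.start} := by
    apply foldl_congr''
    intro x _ s
    simp [auxStep, auxInput_ord]
  rw [h1]
  conv_lhs => rw [← List.take_append_drop m (List.finRange n)]
  rw [List.foldl_append]
  have h2 : ((List.finRange n).take m).foldl (auxStep M (fun j => auxBit m a b j)) {M.start}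
      = auxS M m a := by
    apply foldl_congr''
    intro x hx s
    have := mem_take_finRange hx
    simp [auxStep, auxBit, this]
  rw [h2]
  apply foldl_congr''
  intro x hx s
  have := mem_drop_finRange hx
  simp [auxStep, auxBit, Nat.not_lt.mpr this]

private lemma countOnes_add_countZeros {n : ℕ} (ν : Fin n → Bool) :
    countOnes ν + countZeros ν = n := by
  classical
  unfold countOnes countZeros
  have := Finset.card_filter_add_card_filter_not
    (s := (Finset.univ : Finset (Fin n))) (p := fun i => ν i = true)
  simpa [Bool.not_eq_true] using this

private lemma countOnes_auxInput {n d : ℕ} (M : NOBDD n d) (m a b : ℕ)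
    (hn : n = 2 * m) (ha : a ≤ m) (hb : b ≤ m) :
    countOnes (auxInput M m a b) = a + (m - b) := by
  classical
  unfold countOnes
  have h1 : (Finset.univ.filter (fun i => auxInput M m a b i = true)).card
      = (Finset.univ.filter (fun j : Fin n => auxBit m a b (j : ℕ) = true)).card := by
    apply Finset.card_equiv M.ord.symm
    intro i
    rw [Finset.mem_filter, Finset.mem_filter]; simp [auxInput]
  rw [h1]
  have h2 : (Finset.univ.filter (fun j : Fin n => auxBit m a b (j : ℕ) = true)).card
      = ((Finset.range n).filter (fun j => auxBit m a b j = true)).card := by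
    refine Finset.card_bij (fun j _ => (j : ℕ)) ?_ ?_ ?_
    · intro j hj
      simp only [Finset.mem_filter, Finset.mem_range]
      exact ⟨j.isLt, (Finset.mem_filter.mp hj).2⟩
    · intro x hx y hy hxy
      exact Fin.val_injective hxy
    · intro x hx
      simp only [Finset.mem_filter, Finset.mem_range] at hx
      exact ⟨⟨x, hx.1⟩, by simp [hx.2], rfl⟩
  rw [h2]
  have h3 : (Finset.range n).filter (fun j => auxBit m a b j = true)
      = Finset.range a ∪ Finset.Ico m (m + (m - b)) := by
    ext x
    have hcond : auxBit m a b x = true ↔ (x < a ∨ (m ≤ x ∧ x < m + (m - b))) := by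
      unfold auxBit
      split <;> simp <;> omega
    simp only [Finset.mem_filter, Finset.mem_range, Finset.mem_union, Finset.mem_Ico, hcond]
    omega
  rw [h3, Finset.card_union_of_disjoint, Finset.card_range, Nat.card_Ico]
  · omega
  · rw [Finset.disjoint_left]
    intro x hx hx'
    simp only [Finset.mem_range] at hx
    simp only [Finset.mem_Ico] at hx'
    omega

private lemma notO_auxInput {n d : ℕ} (M : NOBDD n d) (m a b : ℕ)
    (hn : n = 2 * m) (ha : a ≤ m) (hb : b ≤ m) :
    NotO n (auxInput M m a b) = true ↔ a ≠ b := by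
  have h1 := countOnes_auxInput M m a b hn ha hb
  have h2 := countOnes_add_countZeros (auxInput M m a b)
  unfold NotO
  simp only [Bool.not_eq_true', decide_eq_false_iff_not, ne_eq]
  constructor
  · intro h hab; exact h (by omega)
  · intro hab h; exact hab (by omega)

private lemma auxS_injective {n d : ℕ} (M : NOBDD n d) (m : ℕ)
    (hn : n = 2 * m) (hcomp : M.computes (NotO n)) :
    ∀ a ≤ m, ∀ b ≤ m, auxS M m a = auxS M m b → a = b := by
  intro a ha b hb hS
  by_contra hab
  have hacc : M.accepts (auxInput M m a b) :=
    (hcomp _).mpr ((notO_auxInput M m a b hn ha hb).mpr hab)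
  have hrej : ¬ M.accepts (auxInput M m b b) := by
    intro h
    have := (hcomp _).mp h
    rw [notO_auxInput M m b b hn hb hb] at this
    exact this rfl
  apply hrej
  have : M.reach (auxInput M m a b) = M.reach (auxInput M m b b) := by
    rw [reach_eq, reach_eq, hS]
  rwa [NOBDD.accepts, ← this]

end NotOLB

/-- There are infinitely many `n` (in particular, all even `n`) such that any nondeterministic
OBDD computing `NotO_n` has width at least `⌊log₂ n⌋ - 1`. -/
theorem notO_nondeterministic_lower_bound :
    ∀ n : ℕ, Even n →
      ∀ (d : ℕ) (M : NOBDD n d), M.computes (NotO n) → Nat.log 2 n - 1 ≤ d := by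
  intro n hn d M hcomp
  obtain ⟨m, hm⟩ := hn
  have hn2 : n = 2 * m := by omega
  rcases Nat.eq_zero_or_pos m with hm0 | hm1
  · subst hn2; simp [hm0]
  -- the map a ↦ auxS M m a, a ∈ {0,…,m}, is injective
  have hinj : Function.Injective
      (fun a : Fin (m + 1) => (Set.toFinite (auxS M m (a : ℕ))).toFinset) := by
    intro a b h
    have : auxS M m (a : ℕ) = auxS M m (b : ℕ) := by
      have := congrArg (fun t : Finset (Fin d) => (t : Set (Fin d))) h
      simpa [Set.Finite.coe_toFinset] using this
    exact Fin.ext (auxS_injective M m hn2 hcomp (a : ℕ) (by omega) (b : ℕ) (by omega) this)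
  have hcard : m + 1 ≤ 2 ^ d := by
    have := Fintype.card_le_of_injective _ hinj
    simpa [Fintype.card_finset] using this
  have hlog : Nat.log 2 (m + 1) ≤ d := by
    calc Nat.log 2 (m + 1) ≤ Nat.log 2 (2 ^ d) := Nat.log_mono_right hcard
    _ = d := Nat.log_pow one_lt_two d
  have hlogn : Nat.log 2 n = Nat.log 2 m + 1 := by
    rw [hn2, Nat.mul_comm, Nat.log_mul_base one_lt_two (by omega)]
  have : Nat.log 2 m ≤ Nat.log 2 (m + 1) := Nat.log_mono_right (by omega)
  omega
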